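/- For every polynomial p of degree at most n with real coefficients satisfying |p(x)| ≤ 1 for all x ∈ [-1,1], and every x ∈ (-1,1), we have |p'(x)| ≤ n / √(1 - x²). -/

import Mathlib

open Real Finset



lemma geomL (n : ℕ) (hn : 0 < n) (M : ℤ) (h0 : M ≠ 0) (h1 : M.natAbs < 2*n) :
    ∑ k ∈ Finset.range (2*n), Real.cos ((M:ℝ) * (2*k+1) * π / (2*n)) = 0 := by
  have hπ : (π:ℂ) ≠ 0 := Complex.ofReal_ne_zero.mpr Real.pi_ne_zero
  have hn' : (n:ℂ) ≠ 0 := Nat.cast_ne_zero.mpr hn.ne'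
  set r : ℂ := Complex.exp ((M:ℂ) * π / n * Complex.I) with hr
  have hne : r ≠ 1 := by
    intro h
    rw [hr, Complex.exp_eq_one_iff] at h
    obtain ⟨t, ht⟩ := h
    have : (M:ℂ) = 2 * n * t := by
      field_simp at ht
      have h2 : ((M:ℂ)) * π * Complex.I = (2 * n * t) * π * Complex.I := by linear_combination ((π:ℂ) * Complex.I) * ht
      have := mul_right_cancel₀ Complex.I_ne_zero h2
      exact mul_right_cancel₀ hπ this
    have hM : M = 2 * (n:ℤ) * t := by exact_mod_cast this
    have hdvd : (2*n : ℕ) ∣ M.natAbs := by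
      have : ((2*n : ℕ) : ℤ) ∣ M := ⟨t, by push_cast [hM]; ring⟩
      exact Int.ofNat_dvd_right.mp (Int.dvd_natAbs.mpr this)
    have := Nat.le_of_dvd (Int.natAbs_pos.mpr h0) hdvd
    omega
  -- complex geometric sum
  have hsum : ∑ k ∈ Finset.range (2*n),
      Complex.exp (((M:ℝ) * (2*(k:ℝ)+1) * π / (2*n) : ℝ) * Complex.I) = 0 := by
    have hterm : ∀ k ∈ Finset.range (2*n),
        Complex.exp (((M:ℝ) * (2*(k:ℝ)+1) * π / (2*n) : ℝ) * Complex.I)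
          = Complex.exp ((M:ℂ) * π / (2*n) * Complex.I) * r ^ k := by
      intro k _
      rw [hr, ← Complex.exp_nat_mul, ← Complex.exp_add]
      congr 1
      push_cast
      have h2n : (2*(n:ℂ)) ≠ 0 := by simpa using hn'
      field_simp
      ring
    rw [Finset.sum_congr rfl hterm, ← Finset.mul_sum, geom_sum_eq hne]
    have : r ^ (2*n) = 1 := by
      rw [hr, ← Complex.exp_nat_mul, ← Complex.exp_int_mul_two_pi_mul_I M]
      congr 1
      push_cast
      field_simp
    rw [this]
    simp
  calc ∑ k ∈ Finset.range (2*n), Real.cos ((M:ℝ) * (2*k+1) * π / (2*n))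
      = (∑ k ∈ Finset.range (2*n),
          Complex.exp (((M:ℝ) * (2*(k:ℝ)+1) * π / (2*n) : ℝ) * Complex.I)).re := by
        rw [Complex.re_sum]
        exact Finset.sum_congr rfl fun k _ => (Complex.exp_ofReal_mul_I_re _).symm
    _ = 0 := by rw [hsum]; simp


lemma dirichletL (j : ℕ) (x : ℝ) :
    Real.sin (2*j*x) = 2 * Real.sin x * ∑ i ∈ Finset.range j, Real.cos ((2*i+1)*x) := by
  induction j with
  | zero => simp
  | succ j ih =>
    rw [Finset.sum_range_succ, mul_add, ← ih]
    push_cast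
    have : 2*((j:ℝ)+1)*x - 2*j*x = 2*x := by ring
    have h := Real.sin_sub_sin (2*((j:ℝ)+1)*x) (2*(j:ℝ)*x)
    have e1 : (2*((j:ℝ)+1)*x - 2*(j:ℝ)*x)/2 = x := by ring
    have e2 : (2*((j:ℝ)+1)*x + 2*(j:ℝ)*x)/2 = (2*(j:ℝ)+1)*x := by ring
    rw [e1, e2] at h
    linarith [h]


lemma signL' (n : ℕ) (hn : 0 < n) (k : ℕ) :
    Real.sin (2*n*((2*k+1)*π/(4*n))) = (-1)^k := by
  have hn' : (n:ℝ) ≠ 0 := Nat.cast_ne_zero.mpr hn.ne'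
  have : 2*(n:ℝ)*((2*k+1)*π/(4*n)) = k*π + π/2 := by field_simp; ring
  rw [this, Real.sin_add, Real.sin_nat_mul_pi, Real.cos_pi_div_two, Real.sin_pi_div_two]
  have : Real.cos (k*π) = (-1)^k := by
    have := Real.cos_nat_mul_pi_sub 0 k
    simpa using this
  rw [this]; ring


lemma innerL (n : ℕ) (hn : 0 < n) (i j : ℕ) (hi : i < n) (hj : j < n) :
    ∑ k ∈ Finset.range (2*n),
      Real.cos ((2*i+1)*((2*k+1)*π/(4*n))) * Real.cos ((2*j+1)*((2*k+1)*π/(4*n)))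
      = if i = j then n else 0 := by
  have hn' : (n:ℝ) ≠ 0 := Nat.cast_ne_zero.mpr hn.ne'
  have hsplit : ∀ k ∈ Finset.range (2*n),
      Real.cos ((2*i+1)*((2*k+1)*π/(4*n))) * Real.cos ((2*j+1)*((2*k+1)*π/(4*n)))
      = (Real.cos ((((i:ℤ)+j+1 : ℤ):ℝ) * (2*k+1) * π / (2*n))
        + Real.cos ((((i:ℤ)-j : ℤ):ℝ) * (2*k+1) * π / (2*n))) / 2 := by
    intro k _
    set a := (2*(i:ℝ)+1)*((2*k+1)*π/(4*n)) with ha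
    set b := (2*(j:ℝ)+1)*((2*k+1)*π/(4*n)) with hb
    have e1 : ((((i:ℤ)+j+1 : ℤ):ℝ) * (2*k+1) * π / (2*n)) = a + b := by
      push_cast [ha, hb]; field_simp; ring
    have e2 : ((((i:ℤ)-j : ℤ):ℝ) * (2*k+1) * π / (2*n)) = a - b := by
      push_cast [ha, hb]; field_simp; ring
    rw [e1, e2, Real.cos_add, Real.cos_sub]
    ring
  rw [Finset.sum_congr rfl hsplit]
  have h1 : ∑ k ∈ Finset.range (2*n),
      Real.cos ((((i:ℤ)+j+1 : ℤ):ℝ) * (2*k+1) * π / (2*n)) = 0 :=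
    geomL n hn ((i:ℤ)+j+1) (by omega) (by omega)
  have h2 : ∑ k ∈ Finset.range (2*n),
      Real.cos ((((i:ℤ)-j : ℤ):ℝ) * (2*k+1) * π / (2*n))
      = if i = j then 2*(n:ℝ) else 0 := by
    by_cases hij : i = j
    · subst hij
      simp
    · rw [if_neg hij]
      exact geomL n hn ((i:ℤ)-j) (by omega) (by omega)
  rw [← Finset.sum_div, Finset.sum_add_distrib, h1, h2]
  by_cases hij : i = j <;> simp [hij] <;> ring


lemma sinpos (n : ℕ) (hn : 0 < n) (k : ℕ) (hk : k < 2*n) :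
    0 < Real.sin ((2*k+1)*π/(4*n)) := by
  apply Real.sin_pos_of_pos_of_lt_pi
  · positivity
  · rw [div_lt_iff₀ (by positivity)]
    have h4 : 2*k+1 < 4*n := by omega
    have : (2*(k:ℝ)+1) < 4*n := by exact_mod_cast h4
    nlinarith [Real.pi_pos]

lemma SL (n : ℕ) (hn : 0 < n) (m : ℕ) (hm : m ≤ n) :
    ∑ k ∈ Finset.range (2*n),
      (-1:ℝ)^k * Real.sin (2*m*((2*k+1)*π/(4*n))) / Real.sin ((2*k+1)*π/(4*n))^2
      = 4*n*m := by
  have hterm : ∀ k ∈ Finset.range (2*n),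
      (-1:ℝ)^k * Real.sin (2*m*((2*k+1)*π/(4*n))) / Real.sin ((2*k+1)*π/(4*n))^2
      = 4 * ∑ j ∈ Finset.range n, ∑ i ∈ Finset.range m,
          Real.cos ((2*j+1)*((2*k+1)*π/(4*n))) * Real.cos ((2*i+1)*((2*k+1)*π/(4*n))) := by
    intro k hk
    rw [Finset.mem_range] at hk
    have hs := (sinpos n hn k hk).ne'
    rw [← signL' n hn k, dirichletL n _, dirichletL m _, ← Finset.sum_mul_sum]
    field_simp
    ring
  rw [Finset.sum_congr rfl hterm, ← Finset.mul_sum, Finset.sum_comm]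
  rw [Finset.sum_congr rfl (fun j (hj : j ∈ Finset.range n) => Finset.sum_comm)]
  have hinner : ∀ j ∈ Finset.range n,
      (∑ i ∈ Finset.range m, ∑ k ∈ Finset.range (2*n),
        Real.cos ((2*j+1)*((2*k+1)*π/(4*n))) * Real.cos ((2*i+1)*((2*k+1)*π/(4*n))))
      = if j < m then (n:ℝ) else 0 := by
    intro j hj
    rw [Finset.mem_range] at hj
    have : ∀ i ∈ Finset.range m, (∑ k ∈ Finset.range (2*n),
        Real.cos ((2*j+1)*((2*k+1)*π/(4*n))) * Real.cos ((2*i+1)*((2*k+1)*π/(4*n))))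
        = if j = i then (n:ℝ) else 0 := by
      intro i hi
      rw [Finset.mem_range] at hi
      have := innerL n hn j i hj (lt_of_lt_of_le hi hm)
      simpa using this
    rw [Finset.sum_congr rfl this, Finset.sum_ite_eq]
    simp
  rw [Finset.sum_congr rfl hinner]
  have hfil : Finset.filter (fun x => x < m) (Finset.range n) = Finset.range m := by
    ext a; simp; omega
  rw [← Finset.sum_filter, hfil, Finset.sum_const, Finset.card_range]
  push_cast
  ring


lemma CL (n : ℕ) (hn : 0 < n) (m : ℕ) :
    ∑ k ∈ Finset.range (2*n),
      (-1:ℝ)^k * Real.cos (2*m*((2*k+1)*π/(4*n))) / Real.sin ((2*k+1)*π/(4*n))^2 = 0 := by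
  have hn' : (n:ℝ) ≠ 0 := Nat.cast_ne_zero.mpr hn.ne'
  apply Finset.sum_involution (fun k _ => 2*n-1-k)
  · intro k hk
    rw [Finset.mem_range] at hk
    set k' := 2*n-1-k with hk'def
    have hsum : k' + k + 1 = 2*n := by omega
    have hcast : (k':ℝ) = 2*(n:ℝ) - 1 - k := by
      have : (k':ℝ) + k + 1 = 2*n := by exact_mod_cast congrArg (Nat.cast : ℕ → ℝ) hsum
      linarith
    have hangle : (2*(k':ℝ)+1)*π/(4*n) = π - (2*(k:ℝ)+1)*π/(4*n) := by
      rw [hcast]; field_simp; ring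
    have hsign : (-1:ℝ)^k' = -(-1:ℝ)^k := by
      have h1 : (-1:ℝ)^(k'+k) = -1 := Odd.neg_one_pow ⟨n-1, by omega⟩
      have hb : (-1:ℝ)^k * (-1)^k = 1 := by
        rw [← pow_add]; exact Even.neg_one_pow ⟨k, by ring⟩
      rw [pow_add] at h1
      calc (-1:ℝ)^k' = (-1:ℝ)^k' * ((-1:ℝ)^k * (-1)^k) := by rw [hb, mul_one]
        _ = ((-1:ℝ)^k' * (-1)^k) * (-1)^k := by ring
        _ = -(-1:ℝ)^k := by rw [h1]; ring
    have hcos : Real.cos (2*m*((2*k'+1)*π/(4*n))) = Real.cos (2*m*((2*k+1)*π/(4*n))) := by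
      rw [hangle]
      have : 2*(m:ℝ)*(π - (2*(k:ℝ)+1)*π/(4*n)) = m*(2*π) - 2*m*((2*(k:ℝ)+1)*π/(4*n)) := by ring
      rw [this, Real.cos_nat_mul_two_pi_sub]
    have hsin : Real.sin ((2*(k':ℝ)+1)*π/(4*n))^2 = Real.sin ((2*(k:ℝ)+1)*π/(4*n))^2 := by
      rw [hangle, Real.sin_pi_sub]
    rw [hsign, hcos, hsin]
    ring
  · intro k hk _
    rw [Finset.mem_range] at hk
    omega
  · intro k hk
    rw [Finset.mem_range] at hk ⊢
    omega
  · intro k hk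
    rw [Finset.mem_range] at hk
    omega


lemma rieszCos (n : ℕ) (hn : 0 < n) (m : ℕ) (hm : m ≤ n) (θ : ℝ) :
    ∑ k ∈ Finset.range (2*n),
      (-1:ℝ)^k * Real.cos (m*(θ + (2*k+1)*π/(2*n))) / Real.sin ((2*k+1)*π/(4*n))^2
      = -(4*n*m) * Real.sin (m*θ) := by
  have hterm : ∀ k ∈ Finset.range (2*n),
      (-1:ℝ)^k * Real.cos (m*(θ + (2*k+1)*π/(2*n))) / Real.sin ((2*k+1)*π/(4*n))^2
      = Real.cos (m*θ) * ((-1:ℝ)^k * Real.cos (2*m*((2*k+1)*π/(4*n))) / Real.sin ((2*k+1)*π/(4*n))^2)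
        - Real.sin (m*θ) * ((-1:ℝ)^k * Real.sin (2*m*((2*k+1)*π/(4*n))) / Real.sin ((2*k+1)*π/(4*n))^2) := by
    intro k _
    have hn' : (n:ℝ) ≠ 0 := Nat.cast_ne_zero.mpr hn.ne'
    have hang : (m:ℝ)*(θ + (2*k+1)*π/(2*n)) = m*θ + 2*m*((2*k+1)*π/(4*n)) := by
      field_simp; ring
    rw [hang, Real.cos_add]
    ring
  rw [Finset.sum_congr rfl hterm, Finset.sum_sub_distrib, ← Finset.mul_sum, ← Finset.mul_sum,
    SL n hn m hm, CL n hn m]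
  ring


def TRep (j : ℕ) (f : ℝ → ℝ) : Prop :=
  ∃ c : ℕ → ℝ, ∀ θ, f θ = ∑ m ∈ Finset.range (j+1), c m * Real.cos (m*θ)

lemma TRep.mono {j j' : ℕ} {f : ℝ → ℝ} (h : j ≤ j') (hf : TRep j f) : TRep j' f := by
  obtain ⟨c, hc⟩ := hf
  refine ⟨fun m => if m < j+1 then c m else 0, fun θ => ?_⟩
  rw [hc θ]
  rw [← Finset.sum_subset (Finset.range_subset_range.mpr (by omega : j+1 ≤ j'+1))]
  · refine Finset.sum_congr rfl fun m hm => ?_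
    rw [Finset.mem_range] at hm
    simp only [if_pos hm]
  · intro m _ hm
    rw [Finset.mem_range] at hm
    simp only [if_neg hm, zero_mul]

lemma TRep.smul {j : ℕ} {f : ℝ → ℝ} (a : ℝ) (hf : TRep j f) :
    TRep j (fun θ => a * f θ) := by
  obtain ⟨c, hc⟩ := hf
  refine ⟨fun m => a * c m, fun θ => ?_⟩
  simp only [hc θ, Finset.mul_sum]
  exact Finset.sum_congr rfl fun m _ => by ring

lemma TRep.sum {j : ℕ} {s : Finset ℕ} {g : ℕ → ℝ → ℝ}
    (h : ∀ i ∈ s, TRep j (g i)) : TRep j (fun θ => ∑ i ∈ s, g i θ) := by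
  classical
  induction s using Finset.induction_on with
  | empty => exact ⟨fun _ => 0, by simp⟩
  | @insert a s' hx ih =>
    obtain ⟨c, hc⟩ := h a (Finset.mem_insert_self a s')
    obtain ⟨d, hd⟩ := ih fun i hi => h i (Finset.mem_insert_of_mem hi)
    refine ⟨fun m => c m + d m, fun θ => ?_⟩
    simp only []
    rw [Finset.sum_insert hx, hc θ]
    rw [show (∑ i ∈ s', g i θ) = ∑ m ∈ Finset.range (j+1), d m * Real.cos (m*θ) from hd θ]
    rw [← Finset.sum_add_distrib]
    exact Finset.sum_congr rfl fun m _ => by ring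



lemma trep_cos_mul_cos {m j : ℕ} (hm : m ≤ j) :
    TRep (j+1) (fun θ => Real.cos θ * Real.cos (m*θ)) := by
  rcases Nat.eq_zero_or_pos m with hm0 | hm1
  · subst hm0
    refine TRep.mono (by omega : 1 ≤ j+1) ⟨fun t => if t = 1 then 1 else 0, fun θ => ?_⟩
    simp [Finset.sum_ite_eq']
  · refine ⟨fun t => (if t = m+1 then (1:ℝ)/2 else 0) + (if t = m-1 then (1:ℝ)/2 else 0),
      fun θ => ?_⟩
    have hsplit : ∀ t ∈ Finset.range (j+2),
        ((if t = m+1 then (1:ℝ)/2 else 0) + (if t = m-1 then (1:ℝ)/2 else 0)) * Real.cos (t*θ)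
        = (if t = m+1 then (1:ℝ)/2 * Real.cos ((m+1)*θ) else 0)
          + (if t = m-1 then (1:ℝ)/2 * Real.cos (((m-1:ℕ))*θ) else 0) := by
      intro t _
      have hne : m + 1 ≠ m - 1 := by omega
      by_cases h1 : t = m+1
      · subst h1
        rw [if_pos rfl, if_pos rfl, if_neg hne, if_neg hne]
        push_cast
        ring
      · by_cases h2 : t = m-1
        · subst h2
          rw [if_neg h1, if_pos rfl, if_neg h1, if_pos rfl]
          ring
        · rw [if_neg h1, if_neg h2, if_neg h1, if_neg h2]
          ring
    rw [Finset.sum_congr rfl hsplit, Finset.sum_add_distrib,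
      Finset.sum_ite_eq' (Finset.range (j+2)) (m+1),
      Finset.sum_ite_eq' (Finset.range (j+2)) (m-1)]
    rw [if_pos (Finset.mem_range.mpr (by omega)), if_pos (Finset.mem_range.mpr (by omega))]
    have e1 : ((m:ℝ)+1)*θ = m*θ + θ := by ring
    have e2 : (((m-1:ℕ)):ℝ)*θ = m*θ - θ := by
      have : ((m-1:ℕ):ℝ) = (m:ℝ) - 1 := by
        have : (1:ℕ) ≤ m := hm1
        push_cast [Nat.cast_sub this]
        ring
      rw [this]; ring
    push_cast
    rw [e1, e2, Real.cos_add, Real.cos_sub]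
    ring

lemma cospow (j : ℕ) : TRep j (fun θ => Real.cos θ ^ j) := by
  induction j with
  | zero =>
    refine ⟨fun t => 1, fun θ => ?_⟩
    simp
  | succ j ih =>
    obtain ⟨c, hc0⟩ := ih
    have hc : ∀ θ, Real.cos θ ^ j = ∑ m ∈ Finset.range (j+1), c m * Real.cos (m*θ) := hc0
    have : (fun θ => Real.cos θ ^ (j+1))
        = fun θ => ∑ m ∈ Finset.range (j+1), c m * (Real.cos θ * Real.cos (m*θ)) := by
      funext θ
      rw [pow_succ, mul_comm, hc θ, Finset.mul_sum]
      exact Finset.sum_congr rfl fun m _ => by ring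
    rw [this]
    exact TRep.sum fun m hm => TRep.smul (c m)
      (trep_cos_mul_cos (by rw [Finset.mem_range] at hm; omega))



lemma polyrep (n : ℕ) (p : Polynomial ℝ) (hdeg : p.natDegree ≤ n) :
    TRep n (fun θ => p.eval (Real.cos θ)) := by
  have hev : ∀ x : ℝ, p.eval x = ∑ j ∈ Finset.range (n+1), p.coeff j * x^j := fun x =>
    Polynomial.eval_eq_sum_range' (by omega) x
  have : (fun θ => p.eval (Real.cos θ))
      = fun θ => ∑ j ∈ Finset.range (n+1), p.coeff j * (Real.cos θ)^j := by
    funext θ; exact hev _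
  rw [this]
  exact TRep.sum fun j hj => TRep.smul _
    ((cospow j).mono (by rw [Finset.mem_range] at hj; omega))

lemma derivId (n : ℕ) (p : Polynomial ℝ) (c : ℕ → ℝ)
    (hc : ∀ θ, p.eval (Real.cos θ) = ∑ m ∈ Finset.range (n+1), c m * Real.cos (m*θ))
    (θ : ℝ) :
    Real.sin θ * p.derivative.eval (Real.cos θ)
      = ∑ m ∈ Finset.range (n+1), c m * m * Real.sin (m*θ) := by
  have h1 : HasDerivAt (fun θ : ℝ => p.eval (Real.cos θ))
      (p.derivative.eval (Real.cos θ) * (-Real.sin θ)) θ :=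
    (p.hasDerivAt (Real.cos θ)).comp θ (Real.hasDerivAt_cos θ)
  have h2 : HasDerivAt (fun θ : ℝ => ∑ m ∈ Finset.range (n+1), c m * Real.cos (m*θ))
      (∑ m ∈ Finset.range (n+1), c m * (-Real.sin (m*θ) * m)) θ := by
    apply HasDerivAt.fun_sum
    intro m _
    have hm : HasDerivAt (fun θ : ℝ => (m:ℝ) * θ) m θ := by
      simpa using (hasDerivAt_id θ).const_mul (m:ℝ)
    exact ((Real.hasDerivAt_cos ((m:ℝ)*θ)).comp θ hm).const_mul (c m)
  have heq : (fun θ : ℝ => p.eval (Real.cos θ))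
      = fun θ : ℝ => ∑ m ∈ Finset.range (n+1), c m * Real.cos (m*θ) := funext hc
  rw [heq] at h1
  have key := h1.unique h2
  calc Real.sin θ * p.derivative.eval (Real.cos θ)
      = -(p.derivative.eval (Real.cos θ) * (-Real.sin θ)) := by ring
    _ = -(∑ m ∈ Finset.range (n+1), c m * (-Real.sin (m*θ) * m)) := by rw [key]
    _ = ∑ m ∈ Finset.range (n+1), c m * m * Real.sin (m*θ) := by
        rw [← Finset.sum_neg_distrib]
        exact Finset.sum_congr rfl fun m _ => by ring


lemma sinsq_sum (n : ℕ) (hn : 0 < n) :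
    ∑ k ∈ Finset.range (2*n), 1 / Real.sin ((2*k+1)*π/(4*n))^2 = 4*(n:ℝ)*n := by
  have := SL n hn n le_rfl
  rw [← this]
  refine Finset.sum_congr rfl fun k hk => ?_
  rw [signL' n hn k]
  have : (-1:ℝ)^k * (-1:ℝ)^k = 1 := by
    rw [← pow_add]; exact Even.neg_one_pow ⟨k, by ring⟩
  rw [this]

lemma boundL (n : ℕ) (hn : 0 < n) (p : Polynomial ℝ)
    (hb : ∀ x ∈ Set.Icc (-1 : ℝ) 1, |p.eval x| ≤ 1) (c : ℕ → ℝ)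
    (hc : ∀ θ, p.eval (Real.cos θ) = ∑ m ∈ Finset.range (n+1), c m * Real.cos (m*θ))
    (θ : ℝ) :
    |∑ m ∈ Finset.range (n+1), c m * m * Real.sin (m*θ)| ≤ n := by
  have hkey : ∑ k ∈ Finset.range (2*n),
      (-1:ℝ)^k * p.eval (Real.cos (θ + (2*k+1)*π/(2*n))) / Real.sin ((2*k+1)*π/(4*n))^2
      = -(4*n) * ∑ m ∈ Finset.range (n+1), c m * m * Real.sin (m*θ) := by
    have hterm : ∀ k ∈ Finset.range (2*n),
        (-1:ℝ)^k * p.eval (Real.cos (θ + (2*k+1)*π/(2*n))) / Real.sin ((2*k+1)*π/(4*n))^2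
        = ∑ m ∈ Finset.range (n+1),
            c m * ((-1:ℝ)^k * Real.cos (m*(θ + (2*k+1)*π/(2*n))) / Real.sin ((2*k+1)*π/(4*n))^2) := by
      intro k _
      rw [hc (θ + (2*k+1)*π/(2*n)), Finset.mul_sum, Finset.sum_div]
      exact Finset.sum_congr rfl fun m _ => by ring
    rw [Finset.sum_congr rfl hterm, Finset.sum_comm]
    rw [Finset.sum_congr rfl (fun m (hm : m ∈ Finset.range (n+1)) => (Finset.mul_sum _ _ _).symm)]
    rw [Finset.sum_congr rfl (fun m (hm : m ∈ Finset.range (n+1)) => by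
      rw [rieszCos n hn m (by rw [Finset.mem_range] at hm; omega) θ])]
    rw [Finset.mul_sum]
    exact Finset.sum_congr rfl fun m _ => by ring
  have habs : |∑ k ∈ Finset.range (2*n),
      (-1:ℝ)^k * p.eval (Real.cos (θ + (2*k+1)*π/(2*n))) / Real.sin ((2*k+1)*π/(4*n))^2|
      ≤ 4*(n:ℝ)*n := by
    calc |∑ k ∈ Finset.range (2*n),
        (-1:ℝ)^k * p.eval (Real.cos (θ + (2*k+1)*π/(2*n))) / Real.sin ((2*k+1)*π/(4*n))^2|
        ≤ ∑ k ∈ Finset.range (2*n),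
          |(-1:ℝ)^k * p.eval (Real.cos (θ + (2*k+1)*π/(2*n))) / Real.sin ((2*k+1)*π/(4*n))^2| :=
          Finset.abs_sum_le_sum_abs _ _
      _ ≤ ∑ k ∈ Finset.range (2*n), 1 / Real.sin ((2*k+1)*π/(4*n))^2 := by
          refine Finset.sum_le_sum fun k hk => ?_
          rw [Finset.mem_range] at hk
          have hs := sinpos n hn k hk
          rw [abs_div, abs_mul, abs_pow, abs_neg, abs_one, one_pow, one_mul]
          rw [abs_of_pos (by positivity : (0:ℝ) < Real.sin ((2*k+1)*π/(4*n))^2)]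
          apply div_le_div_of_nonneg_right ?_ (by positivity)
          · exact hb _ ⟨Real.neg_one_le_cos _, Real.cos_le_one _⟩
      _ = 4*(n:ℝ)*n := sinsq_sum n hn
  have hn4 : (0:ℝ) < 4*n := by positivity
  have : |(-(4*(n:ℝ))) * ∑ m ∈ Finset.range (n+1), c m * m * Real.sin (m*θ)| ≤ 4*(n:ℝ)*n := by
    rw [← hkey]; exact habs
  rw [abs_mul, abs_neg, abs_of_pos hn4] at this
  exact (mul_le_mul_iff_of_pos_left hn4).mp this

theorem bernstein_inequality (n : ℕ) (p : Polynomial ℝ) (hdeg : p.natDegree ≤ n)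
    (hb : ∀ x ∈ Set.Icc (-1 : ℝ) 1, |p.eval x| ≤ 1) :
    ∀ x ∈ Set.Ioo (-1 : ℝ) 1, |p.derivative.eval x| ≤ (n : ℝ) / Real.sqrt (1 - x ^ 2) := by
  intro x hx
  obtain ⟨hx1, hx2⟩ := hx
  rcases Nat.eq_zero_or_pos n with h0 | hn
  · subst h0
    have hp := Polynomial.eq_C_of_natDegree_le_zero hdeg
    rw [hp]
    simp
  · have hsq : 0 < 1 - x^2 := by nlinarith
    have hs : 0 < Real.sqrt (1-x^2) := Real.sqrt_pos.mpr hsq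
    set θ := Real.arccos x with hθ
    have hcos : Real.cos θ = x := Real.cos_arccos hx1.le hx2.le
    have hsin : Real.sin θ = Real.sqrt (1-x^2) := by rw [hθ]; exact Real.sin_arccos x
    obtain ⟨c, hc0⟩ := polyrep n p hdeg
    have hc : ∀ t, p.eval (Real.cos t) = ∑ m ∈ Finset.range (n+1), c m * Real.cos (m*t) := hc0
    have hid := derivId n p c hc θ
    rw [hcos, hsin] at hid
    have hbd := boundL n hn p hb c hc θ
    rw [← hid, abs_mul, abs_of_pos hs] at hbd
    rw [div_eq_inv_mul, ← abs_of_pos hs]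
    calc |p.derivative.eval x|
        = (Real.sqrt (1-x^2))⁻¹ * (Real.sqrt (1-x^2) * |p.derivative.eval x|) := by
          field_simp
      _ ≤ (Real.sqrt (1-x^2))⁻¹ * n := by
          exact mul_le_mul_of_nonneg_left hbd (by positivity)
      _ = |Real.sqrt (1-x^2)|⁻¹ * n := by rw [abs_of_pos hs]
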